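/- Let V be a finite-dimensional commutative real algebra with positive definite associative symmetric bilinear form and nonzero multiplication. Then V contains a nonzero idempotent c (namely an extremal one obtained from maximizing ⟨x,x²⟩ on the unit sphere) such that every eigenvalue of L_c on the orthogonal complement of c is at most 1/2. -/

import Mathlib

private lemma sq19_small (d C eps : ℝ) (heps : 0 < eps)
    (h : ∀ s : ℝ, 0 < s → s ≤ eps → d * s ≤ C * s ^ 2) : d ≤ 0 := by
  by_contra hd
  push_neg at hd
  have hCpos : (0:ℝ) < |C| + 1 := by positivity
  set s := min eps (d / (|C| + 1)) with hs
  have hspos : 0 < s := lt_min heps (by positivity)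
  have h1 := h s hspos (min_le_left _ _)
  have h2 : s ≤ d / (|C| + 1) := min_le_right _ _
  have h3 : C * s ^ 2 ≤ (|C| * s) * s := by
    nlinarith [le_abs_self C, sq_nonneg s, hspos]
  have h4 : |C| * s < d := by
    have ha : |C| * s ≤ |C| * (d / (|C| + 1)) := mul_le_mul_of_nonneg_left h2 (abs_nonneg C)
    have hb : |C| * (d / (|C| + 1)) < d := by
      rw [mul_comm, div_mul_eq_mul_div, div_lt_iff₀ hCpos]
      nlinarith [hd]
    linarith
  have h5 := mul_lt_mul_of_pos_right h4 hspos
  nlinarith [h1, h3, h5]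

private lemma sq19_sqrt_easy (u : ℝ) (h0 : 0 ≤ u) :
    (1 + u) * Real.sqrt (1 + u) ≤ 1 + 2 * u + u ^ 2 := by
  have h2 : (0:ℝ) ≤ 1 + u := by linarith
  have h5 : Real.sqrt (1 + u) ≤ 1 + u := by
    nlinarith [Real.sq_sqrt h2, Real.sqrt_nonneg (1 + u)]
  nlinarith [h5, h2]

private lemma sq19_sqrt_fine (u : ℝ) (h0 : 0 ≤ u) :
    (1 + u) * Real.sqrt (1 + u) ≤ 1 + (3/2) * u + u ^ 2 := by
  have h2 : (0:ℝ) ≤ 1 + u := by linarith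
  have h3 : (1 + u) * Real.sqrt (1 + u) = Real.sqrt ((1 + u) ^ 3) := by
    rw [pow_succ, Real.sqrt_mul (by positivity), Real.sqrt_sq h2]
  rw [h3]
  have h4 : (1 + u) ^ 3 ≤ (1 + (3/2) * u + u ^ 2) ^ 2 := by nlinarith
  calc Real.sqrt ((1 + u) ^ 3) ≤ Real.sqrt ((1 + (3/2) * u + u ^ 2) ^ 2) :=
        Real.sqrt_le_sqrt h4
    _ = 1 + (3/2) * u + u ^ 2 := Real.sqrt_sq (by positivity)

private lemma sq19_stepA (lam W A2 A3 s : ℝ) (hlam : 0 < lam) (hW : 0 ≤ W)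
    (hs : 0 < s) (hs1 : s ≤ 1)
    (h : lam + 3 * W * s + 3 * A2 * s ^ 2 + A3 * s ^ 3
      ≤ lam * ((1 + W * s ^ 2) * Real.sqrt (1 + W * s ^ 2))) :
    (3 * W) * s ≤ (|2 * lam * W - 3 * A2| + |A3| + lam * W ^ 2) * s ^ 2 := by
  have hu : 0 ≤ W * s ^ 2 := by positivity
  have h2 := sq19_sqrt_easy (W * s ^ 2) hu
  have h3 : lam * ((1 + W * s ^ 2) * Real.sqrt (1 + W * s ^ 2))
      ≤ lam * (1 + 2 * (W * s ^ 2) + (W * s ^ 2) ^ 2) :=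
    mul_le_mul_of_nonneg_left h2 hlam.le
  have h4 := le_trans h h3
  have hs2 : 0 < s ^ 2 := by positivity
  have hs3 : 0 < s ^ 3 := by positivity
  have hs32 : s ^ 3 ≤ s ^ 2 := by nlinarith
  have hs42 : s ^ 4 ≤ s ^ 2 := by nlinarith
  have e1 : (2 * lam * W - 3 * A2) * s ^ 2 ≤ |2 * lam * W - 3 * A2| * s ^ 2 :=
    mul_le_mul_of_nonneg_right (le_abs_self _) hs2.le
  have e2 : -A3 * s ^ 3 ≤ |A3| * s ^ 3 :=
    mul_le_mul_of_nonneg_right (neg_le_abs A3) hs3.le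
  have e3 : |A3| * s ^ 3 ≤ |A3| * s ^ 2 := mul_le_mul_of_nonneg_left hs32 (abs_nonneg _)
  have e4 : lam * W ^ 2 * s ^ 4 ≤ lam * W ^ 2 * s ^ 2 :=
    mul_le_mul_of_nonneg_left hs42 (by positivity)
  nlinarith [h4, e1, e2, e3, e4]

private lemma sq19_stepB (lam t Q b3 s : ℝ) (hlam : 0 < lam) (hQ : 0 < Q)
    (hs : 0 < s) (hs1 : s ≤ 1)
    (h : lam + 3 * (lam * t * Q) * s ^ 2 + b3 * s ^ 3
      ≤ lam * ((1 + Q * s ^ 2) * Real.sqrt (1 + Q * s ^ 2))) :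
    (3 * (lam * t * Q) - (3/2) * lam * Q) * s ≤ (|b3| + lam * Q ^ 2) * s ^ 2 := by
  have hu0 : 0 ≤ Q * s ^ 2 := by positivity
  have h2 := sq19_sqrt_fine (Q * s ^ 2) hu0
  have h3 : lam * ((1 + Q * s ^ 2) * Real.sqrt (1 + Q * s ^ 2))
      ≤ lam * (1 + (3/2) * (Q * s ^ 2) + (Q * s ^ 2) ^ 2) :=
    mul_le_mul_of_nonneg_left h2 hlam.le
  have h4 := le_trans h h3
  have hs3 : 0 < s ^ 3 := by positivity
  have hs43 : s ^ 4 ≤ s ^ 3 := by nlinarith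
  have e2 : -b3 * s ^ 3 ≤ |b3| * s ^ 3 :=
    mul_le_mul_of_nonneg_right (neg_le_abs b3) hs3.le
  have e4 : lam * Q ^ 2 * s ^ 4 ≤ lam * Q ^ 2 * s ^ 3 :=
    mul_le_mul_of_nonneg_left hs43 (by positivity)
  have h6 : ((3 * (lam * t * Q) - (3/2) * lam * Q) * s) * s ≤ ((|b3| + lam * Q ^ 2) * s ^ 2) * s := by
    nlinarith [h4, e2, e4]
  exact le_of_mul_le_mul_right h6 hs

set_option maxHeartbeats 1000000 in
theorem stmt_19 {V : Type*} [AddCommGroup V] [Module ℝ V] [FiniteDimensional ℝ V]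
    (mul : V →ₗ[ℝ] V →ₗ[ℝ] V) (hcomm : ∀ x y, mul x y = mul y x)
    (B : V →ₗ[ℝ] V →ₗ[ℝ] ℝ) (hsymm : ∀ x y, B x y = B y x)
    (hassoc : ∀ x y z, B (mul x y) z = B x (mul y z))
    (hpos : ∀ x, x ≠ 0 → 0 < B x x)
    (hmul : ¬ ∀ x y, mul x y = 0) :
    ∃ c : V, mul c c = c ∧ c ≠ 0 ∧
      ∀ (t : ℝ) (y : V), y ≠ 0 → B y c = 0 → mul c y = t • y → t ≤ 1 / 2 := by
  classical
  -- full symmetry of the trilinear form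
  have key : ∀ a b : V, B b (mul a a) = B a (mul a b) := by
    intro a b
    calc B b (mul a a) = B (mul b a) a := (hassoc b a a).symm
      _ = B (mul a b) a := by rw [hcomm]
      _ = B a (mul a b) := hsymm _ _
  -- cubic expansion
  have expand : ∀ (a b : V) (s : ℝ),
      B (a + s • b) (mul (a + s • b) (a + s • b))
      = B a (mul a a) + 3 * B b (mul a a) * s + 3 * B a (mul b b) * s ^ 2
        + B b (mul b b) * s ^ 3 := by
    intro a b s
    have h1 : B a (mul a b) = B b (mul a a) := (key a b).symm
    have h2 : B b (mul a b) = B a (mul b b) := by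
      rw [key b a, hcomm b a]
    simp only [map_add, map_smul, LinearMap.add_apply, LinearMap.smul_apply, smul_eq_mul,
      hcomm b a, h1, h2]
    ring
  -- the cubic form attains positive values
  have hex : ∃ x : V, 0 < B x (mul x x) := by
    by_contra hno
    push_neg at hno
    have hzero : ∀ x : V, B x (mul x x) = 0 := by
      intro x
      have h1 := hno x
      have h2 := hno (-x)
      simp only [map_neg, LinearMap.neg_apply, neg_neg] at h2
      linarith
    have hc2 : ∀ a b : V, B a (mul b b) = 0 := by
      intro a b
      have e1 := expand a b 1
      have e2 := expand a b (-1)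
      rw [hzero, hzero, hzero] at e1 e2
      have h1 : (0:ℝ) = 3 * B b (mul a a) + 3 * B a (mul b b) := by linarith [e1]
      have h2 : (0:ℝ) = -(3 * B b (mul a a)) + 3 * B a (mul b b) := by linarith [e2]
      linarith
    have hsq : ∀ b : V, mul b b = 0 := by
      intro b
      by_contra hb
      have h1 := hpos (mul b b) hb
      have h2 := hc2 (mul b b) b
      linarith
    apply hmul
    intro x y
    have h := hsq (x + y)
    simp only [map_add, LinearMap.add_apply, hsq x, hsq y, hcomm y x, zero_add, add_zero] at h
    have h2 : (2:ℝ) • (mul x y) = 0 := by rw [two_smul]; exact h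
    rcases smul_eq_zero.mp h2 with h3 | h3
    · norm_num at h3
    · exact h3
  -- inner product space structure from B
  have hBnn : ∀ x : V, 0 ≤ B x x := by
    intro x
    by_cases hx : x = 0
    · simp [hx]
    · exact (hpos x hx).le
  letI core : InnerProductSpace.Core ℝ V :=
  { inner := fun x y => B x y
    conj_inner_symm := fun x y => by simpa using hsymm y x
    re_inner_nonneg := fun x => by simpa using hBnn x
    definite := fun x hx => by
      by_contra h
      exact absurd hx (ne_of_gt (hpos x h))
    add_left := fun x y z => by simp
    smul_left := fun x y r => by simp }
  letI : NormedAddCommGroup V := core.toNormedAddCommGroup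
  letI : InnerProductSpace ℝ V := InnerProductSpace.ofCore core.toCore
  have hnorm : ∀ x : V, ‖x‖ = Real.sqrt (B x x) := fun x => rfl
  -- continuity of the cubic form
  have hMc : Continuous fun x : V => mul x x := by
    have := (LinearMap.toContinuousLinearMap.toLinearMap.comp mul).continuous_of_finiteDimensional
    exact this.clm_apply continuous_id
  have hf : Continuous fun x : V => B x (mul x x) := by
    have hB := (LinearMap.toContinuousLinearMap.toLinearMap.comp B).continuous_of_finiteDimensional
    exact hB.clm_apply hMc
  -- the sphere
  have hSdef : Metric.sphere (0:V) 1 = {x : V | B x x = 1} := by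
    ext x
    simp [Metric.mem_sphere, dist_zero_right, hnorm x, Real.sqrt_eq_one]
  obtain ⟨x₀, hx₀⟩ := hex
  have hx₀ne : x₀ ≠ 0 := by
    rintro rfl
    simp at hx₀
  have hom : ∀ (r : ℝ) (x : V), B (r • x) (mul (r • x) (r • x)) = r ^ 3 * B x (mul x x) := by
    intro r x
    simp only [map_smul, LinearMap.smul_apply, smul_eq_mul]
    ring
  have hunit : ∀ x : V, x ≠ 0 →
      B ((Real.sqrt (B x x))⁻¹ • x) ((Real.sqrt (B x x))⁻¹ • x) = 1 := by
    intro x hx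
    have h := hpos x hx
    have hs : 0 < Real.sqrt (B x x) := Real.sqrt_pos.mpr h
    have hss : Real.sqrt (B x x) * Real.sqrt (B x x) = B x x := Real.mul_self_sqrt h.le
    simp only [map_smul, LinearMap.smul_apply, smul_eq_mul]
    rw [← hss]
    field_simp
    rw [Real.sqrt_sq hs.le]
  set u₀ := (Real.sqrt (B x₀ x₀))⁻¹ • x₀ with hu₀def
  have hu₀ : B u₀ u₀ = 1 := hunit x₀ hx₀ne
  have hcpt : IsCompact {x : V | B x x = 1} := hSdef ▸ isCompact_sphere (0:V) 1
  obtain ⟨c₀, hc₀S, hmaxo⟩ := hcpt.exists_isMaxOn ⟨u₀, hu₀⟩ hf.continuousOn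
  have hc₀c₀ : B c₀ c₀ = 1 := hc₀S
  set lam := B c₀ (mul c₀ c₀) with hlam
  have hmax' : ∀ x : V, B x x = 1 → B x (mul x x) ≤ lam := fun x hx => hmaxo hx
  have hc₀ne : c₀ ≠ 0 := by
    rintro rfl
    simp at hc₀c₀
  -- lam > 0
  have hlampos : 0 < lam := by
    have h1 := hmax' u₀ hu₀
    have hr : 0 < Real.sqrt (B x₀ x₀) := Real.sqrt_pos.mpr (hpos x₀ hx₀ne)
    have h2 : B u₀ (mul u₀ u₀) = ((Real.sqrt (B x₀ x₀))⁻¹) ^ 3 * B x₀ (mul x₀ x₀) :=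
      hom _ _
    have h3 : 0 < B u₀ (mul u₀ u₀) := by
      rw [h2]
      exact mul_pos (pow_pos (inv_pos.mpr hr) 3) hx₀
    linarith
  -- global bound
  have hbound : ∀ x : V, B x (mul x x) ≤ lam * (B x x * Real.sqrt (B x x)) := by
    intro x
    by_cases hx : x = 0
    · simp [hx]
    · have hn := hpos x hx
      have hr : 0 < Real.sqrt (B x x) := Real.sqrt_pos.mpr hn
      have hr0 : Real.sqrt (B x x) ≠ 0 := ne_of_gt hr
      set r := Real.sqrt (B x x) with hrdef
      have hrr : r * r = B x x := Real.mul_self_sqrt hn.le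
      have h1 := hmax' (r⁻¹ • x) (hunit x hx)
      rw [hom r⁻¹ x] at h1
      have h4 : r ^ 3 * ((r⁻¹) ^ 3 * B x (mul x x)) ≤ r ^ 3 * lam :=
        mul_le_mul_of_nonneg_left h1 (by positivity)
      have h6 : B x (mul x x) = r ^ 3 * ((r⁻¹) ^ 3 * B x (mul x x)) := by
        field_simp
      have h7 : r ^ 3 = B x x * r := by
        rw [pow_succ, sq, hrr]
      rw [← h6, h7] at h4
      linarith [h4, mul_comm lam (B x x * r)]
  -- First order condition: mul c₀ c₀ = lam • c₀
  have hfirst : mul c₀ c₀ = lam • c₀ := by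
    set w := mul c₀ c₀ - lam • c₀ with hwdef
    have hmw : mul c₀ c₀ = w + lam • c₀ := by rw [hwdef]; abel
    have hWc : B c₀ w = 0 := by
      rw [hwdef]
      simp only [map_sub, map_smul, smul_eq_mul, hc₀c₀]
      rw [← hlam]
      ring
    have hBwc : B w c₀ = 0 := by rw [hsymm]; exact hWc
    suffices hwz : w = 0 by
      have h9 : mul c₀ c₀ - lam • c₀ = 0 := hwz
      rw [sub_eq_zero] at h9
      exact h9
    by_contra hw0
    have hWpos : 0 < B w w := hpos w hw0
    have hc1 : B w (mul c₀ c₀) = B w w := by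
      rw [hmw]
      simp only [map_add, map_smul, smul_eq_mul, hBwc]
      ring
    have hExp : ∀ s : ℝ, B (c₀ + s • w) (mul (c₀ + s • w) (c₀ + s • w))
        = lam + 3 * B w w * s + 3 * B c₀ (mul w w) * s ^ 2 + B w (mul w w) * s ^ 3 := by
      intro s
      rw [expand c₀ w s, hc1, ← hlam]
    have hBx : ∀ s : ℝ, B (c₀ + s • w) (c₀ + s • w) = 1 + B w w * s ^ 2 := by
      intro s
      simp only [map_add, map_smul, LinearMap.add_apply, LinearMap.smul_apply, smul_eq_mul,
        hc₀c₀, hWc, hBwc]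
      ring
    have hkey : ∀ s : ℝ, 0 < s → s ≤ 1 → (3 * B w w) * s
        ≤ (|2 * lam * B w w - 3 * B c₀ (mul w w)| + |B w (mul w w)| + lam * (B w w) ^ 2) * s ^ 2 := by
      intro s hs hs1
      have h1 := hbound (c₀ + s • w)
      rw [hExp s, hBx s] at h1
      exact sq19_stepA lam (B w w) (B c₀ (mul w w)) (B w (mul w w)) s hlampos hWpos.le hs hs1
        (by linarith [h1, mul_assoc lam (1 + B w w * s ^ 2) (Real.sqrt (1 + B w w * s ^ 2))])
    have h10 := sq19_small (3 * B w w) _ 1 one_pos hkey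
    linarith
  -- Construct the idempotent
  have hlamne : lam ≠ 0 := ne_of_gt hlampos
  refine ⟨lam⁻¹ • c₀, ?_, ?_, ?_⟩
  · simp only [map_smul, LinearMap.smul_apply, hfirst, smul_smul]
    congr 1
    field_simp
  · exact smul_ne_zero (inv_ne_zero hlamne) hc₀ne
  · intro t y hy hyc hcy
    have hyc₀ : B y c₀ = 0 := by
      have h1 : B y (lam⁻¹ • c₀) = lam⁻¹ * B y c₀ := by
        simp [map_smul]
      rw [h1] at hyc
      rcases mul_eq_zero.mp hyc with h | h
      · exact absurd h (inv_ne_zero hlamne)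
      · exact h
    have hc₀y : B c₀ y = 0 := by rw [hsymm]; exact hyc₀
    have hmc₀y : mul c₀ y = (lam * t) • y := by
      have h1 : mul (lam⁻¹ • c₀) y = lam⁻¹ • mul c₀ y := by
        simp [map_smul]
      rw [h1] at hcy
      have h2 : lam • (lam⁻¹ • mul c₀ y) = lam • (t • y) := by rw [hcy]
      rw [smul_smul, mul_inv_cancel₀ hlamne, one_smul, smul_smul] at h2
      exact h2
    have hQpos : 0 < B y y := hpos y hy
    have hc1 : B y (mul c₀ c₀) = 0 := by
      rw [hfirst]
      simp [map_smul, hyc₀]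
    have hc2 : B c₀ (mul y y) = lam * t * B y y := by
      rw [key y c₀, hcomm y c₀, hmc₀y, map_smul, smul_eq_mul]
    have hExp : ∀ s : ℝ, B (c₀ + s • y) (mul (c₀ + s • y) (c₀ + s • y))
        = lam + 3 * (lam * t * B y y) * s ^ 2 + B y (mul y y) * s ^ 3 := by
      intro s
      rw [expand c₀ y s, hc1, hc2, ← hlam]
      ring
    have hBx : ∀ s : ℝ, B (c₀ + s • y) (c₀ + s • y) = 1 + B y y * s ^ 2 := by
      intro s
      simp only [map_add, map_smul, LinearMap.add_apply, LinearMap.smul_apply, smul_eq_mul,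
        hc₀c₀, hc₀y, hyc₀]
      ring
    have hkey : ∀ s : ℝ, 0 < s → s ≤ 1 →
        (3 * (lam * t * B y y) - (3/2) * lam * B y y) * s
        ≤ (|B y (mul y y)| + lam * (B y y) ^ 2) * s ^ 2 := by
      intro s hs hs1
      have h1 := hbound (c₀ + s • y)
      rw [hExp s, hBx s] at h1
      exact sq19_stepB lam t (B y y) (B y (mul y y)) s hlampos hQpos hs hs1
        (by linarith [h1, mul_assoc lam (1 + B y y * s ^ 2) (Real.sqrt (1 + B y y * s ^ 2))])
    have hd0 := sq19_small _ _ 1 one_pos hkey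
    nlinarith [mul_pos hlampos hQpos, hd0]
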